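/- Let F : K → L be any functor between locally small (possibly large) categories. The functor PF : PK → PL has a right adjoint if and only if for every object L of L the presheaf L(F−, L) : K^op → Set is small; and in that case the right adjoint is given by restriction along F, sending G ∈ PL to G ∘ F^op. -/

import Mathlib

open CategoryTheory CategoryTheory.Limits Opposite

universe w v v' u u'

/-- A functor `S : K ⥤ M` is (`w`-)small if it is the left Kan extension of its
restriction to some small full subcategory of `K`. -/
def IsSmallFunctor {K : Type u} [Category.{v} K] {M : Type u'} [Category.{v'} M]
    (S : K ⥤ M) : Prop :=
  ∃ P : K → Prop, Small.{w} (Subtype P) ∧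
    S.IsLeftKanExtension (𝟙 (ObjectProperty.ι P ⋙ S))

/-- Representable presheaves are small. -/
theorem isSmallFunctor_yoneda_obj {K : Type u} [Category.{v} K] (A : K) :
    IsSmallFunctor.{w} (yoneda.obj A) := by
  refine ⟨fun X => X = op A, ?_, ?_⟩
  · have : Subsingleton {X : Kᵒᵖ // X = op A} :=
      ⟨fun X Y => Subtype.ext (X.2.trans Y.2.symm)⟩
    infer_instance
  · set P : Kᵒᵖ → Prop := fun X => X = op A with hP
    set ι := ObjectProperty.ι P with hι
    constructor
    refine ⟨IsInitial.ofUniqueHom (fun E => StructuredArrow.homMk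
      (yonedaEquiv.symm (E.hom.app ⟨op A, rfl⟩ (𝟙 A))) ?_) ?_⟩
    · ext X f
      have hnat := NatTrans.naturality_apply E.hom
        (show (⟨op A, rfl⟩ : ObjectProperty.FullSubcategory P) ⟶ X from ObjectProperty.homMk f.op) (𝟙 A)
      have hred : (ι ⋙ yoneda.obj A).map
          (show (⟨op A, rfl⟩ : ObjectProperty.FullSubcategory P) ⟶ X from ObjectProperty.homMk f.op) (𝟙 A) = f :=
        Category.comp_id f
      rw [hred] at hnat
      exact hnat.symm
    · intro E m
      apply StructuredArrow.hom_ext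
      ext Y g
      have hx : m.right.app (op A) (𝟙 A) = E.hom.app ⟨op A, rfl⟩ (𝟙 A) :=
        congrArg (fun h => h (𝟙 A)) (NatTrans.congr_app m.w ⟨op A, rfl⟩)
      have hnat := NatTrans.naturality_apply m.right (Quiver.Hom.op g : op A ⟶ Y) (𝟙 A)
      have hg : (yoneda.obj A).map (Quiver.Hom.op g : op A ⟶ Y) (𝟙 A) = g := Category.comp_id g
      change m.right.app Y g = E.right.map (Quiver.Hom.op g) (E.hom.app ⟨op A, rfl⟩ (𝟙 A))
      rw [← hx]
      exact (congrArg (m.right.app Y) hg.symm).trans hnat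

/-- The category of small presheaves on `K`. -/
abbrev SmallPresheaf (K : Type u) [Category.{v} K] : Type (max u (v + 1)) :=
  ObjectProperty.FullSubcategory (fun F : Kᵒᵖ ⥤ Type v => IsSmallFunctor.{v} F)

/-- The Yoneda embedding of `K` into its category of small presheaves. -/
def smallYoneda (K : Type u) [Category.{v} K] : K ⥤ SmallPresheaf K where
  obj A := ⟨yoneda.obj A, isSmallFunctor_yoneda_obj A⟩
  map f := ObjectProperty.homMk (yoneda.map f)

/-- `L` is a limit of `S : C ⥤ A` weighted by `φ : C ⥤ Type v`, i.e. morphisms `a ⟶ L`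
correspond, naturally in `a`, to natural transformations `φ ⟶ A(a, S-)`. -/
def IsWeightedLimit {C : Type u} [Category.{v} C] {A : Type u'} [Category.{v'} A]
    (φ : C ⥤ Type v) (S : C ⥤ A) (L : A) : Prop :=
  ∃ e : ∀ a : A, (a ⟶ L) ≃
      ((φ ⋙ uliftFunctor.{v'}) ⟶ (S ⋙ coyoneda.obj (op a) ⋙ uliftFunctor.{v})),
    ∀ (a a' : A) (f : a' ⟶ a) (g : a ⟶ L) (c : C) (x : φ.obj c),
      (e a' (f ≫ g)).app c ⟨x⟩ = ⟨f ≫ ((e a g).app c ⟨x⟩).down⟩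

/-- `L` is a colimit of `T : Cᵒᵖ ⥤ A` weighted by `φ : C ⥤ Type v`, i.e. morphisms `L ⟶ a`
correspond, naturally in `a`, to natural transformations `φ ⟶ A(T-, a)`. -/
def IsWeightedColimit {C : Type u} [Category.{v} C] {A : Type u'} [Category.{v'} A]
    (φ : C ⥤ Type v) (T : Cᵒᵖ ⥤ A) (L : A) : Prop :=
  ∃ e : ∀ a : A, (L ⟶ a) ≃
      ((φ ⋙ uliftFunctor.{v'}) ⟶ (T.rightOp ⋙ yoneda.obj a ⋙ uliftFunctor.{v})),
    ∀ (a a' : A) (f : a ⟶ a') (g : L ⟶ a) (c : C) (x : φ.obj c),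
      (e a' (g ≫ f)).app c ⟨x⟩ = ⟨((e a g).app c ⟨x⟩).down ≫ f⟩

/-- A class of weights with small domains. -/
def WeightClass : Type (v + 1) :=
  ∀ C : Cat.{v, v}, (C ⥤ Type v) → Prop

/-- A category is `Φ`-complete if it has all `φ`-weighted limits for `φ ∈ Φ`. -/
def PhiComplete (Φ : WeightClass.{v}) (A : Type u) [Category.{v'} A] : Prop :=
  ∀ (C : Cat.{v, v}) (φ : C ⥤ Type v), Φ C φ →
    ∀ S : C ⥤ A, ∃ L : A, IsWeightedLimit φ S L

/-- A category is `Φ`-cocomplete if it has all `φ`-weighted colimits for `φ ∈ Φ`. -/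
def PhiCocomplete (Φ : WeightClass.{v}) (A : Type u) [Category.{v'} A] : Prop :=
  ∀ (C : Cat.{v, v}) (φ : C ⥤ Type v), Φ C φ →
    ∀ T : Cᵒᵖ ⥤ A, ∃ L : A, IsWeightedColimit φ T L

/-- A functor is `Φ`-continuous if it preserves all `φ`-weighted limits for `φ ∈ Φ`. -/
def PhiContinuous (Φ : WeightClass.{v}) {A : Type u} [Category.{v'} A]
    {B : Type u'} [Category.{w} B] (F : A ⥤ B) : Prop :=
  ∀ (C : Cat.{v, v}) (φ : C ⥤ Type v), Φ C φ →
    ∀ (S : C ⥤ A) (L : A), IsWeightedLimit φ S L → IsWeightedLimit φ (S ⋙ F) (F.obj L)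

/-- The closure of a collection `P` of objects of `A` under `Φ`-weighted colimits. -/
inductive PhiClosure (Φ : WeightClass.{v}) {A : Type u} [Category.{v'} A]
    (P : A → Prop) : A → Prop
  | base {X : A} (hX : P X) : PhiClosure Φ P X
  | colim {C : Cat.{v, v}} (φ : C ⥤ Type v) (hφ : Φ C φ) (T : Cᵒᵖ ⥤ A)
      (hT : ∀ c : Cᵒᵖ, PhiClosure Φ P (T.obj c)) {L : A}
      (hL : IsWeightedColimit φ T L) : PhiClosure Φ P L

/-- The smallness condition on a class of weights: for every small `C`, the closure of the
representables in the presheaf category of `C` under `Φ`-weighted colimits is small. -/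
def SmallnessCondition (Φ : WeightClass.{v}) : Prop :=
  ∀ C : Cat.{v, v}, EssentiallySmall.{v} (ObjectProperty.FullSubcategory (PhiClosure Φ
    (fun F : Cᵒᵖ ⥤ Type v => ∃ c : C, Nonempty (F ≅ yoneda.obj c))))

/-- The soundness condition on a class of weights: for every small `Φ`-complete `D` and every
`Φ`-continuous `ψ : D ⥤ Type v`, the weighted-colimit functor `ψ * (-) : [Dᵒᵖ, Type v] ⥤ Type v`
(i.e. the small-colimit-preserving extension of `ψ` along the Yoneda embedding) is
`Φ`-continuous. -/
def SoundnessCondition (Φ : WeightClass.{v}) : Prop :=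
  ∀ D : Cat.{v, v}, PhiComplete Φ D → ∀ ψ : D ⥤ Type v, PhiContinuous Φ ψ →
    ∀ T : (Dᵒᵖ ⥤ Type v) ⥤ Type v, PreservesColimitsOfSize.{v, v} T →
      Nonempty ((yoneda : D ⥤ _) ⋙ T ≅ ψ) → PhiContinuous Φ T

/-- `φ` belongs to the saturation of `Φ` if it lies in the closure of the representables
under `Φ`-weighted colimits in the presheaf category over its domain. -/
def InSaturation (Φ : WeightClass.{v}) (C : Cat.{v, v}) (φ : C ⥤ Type v) : Prop :=
  PhiClosure Φ (fun F : C ⥤ Type v => ∃ c : Cᵒᵖ, Nonempty (F ≅ coyoneda.obj c)) φ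

/-- A category `J` is `α`-filtered when every diagram with fewer than `α` arrows
admits a cocone. -/
def IsCardinalFiltered (J : Type u) [Category.{v'} J] (α : Cardinal.{v}) : Prop :=
  ∀ D : Cat.{v, v}, Cardinal.mk (Arrow D) < α → ∀ F : D ⥤ J, Nonempty (Cocone F)

/-- An object `X` is `α`-presentable when its hom-functor preserves `α`-filtered colimits. -/
def IsPresentableObj {K : Type u} [Category.{v} K] (α : Cardinal.{v}) (X : K) : Prop :=
  ∀ J : Cat.{v, v}, IsCardinalFiltered J α →
    PreservesColimitsOfShape J (coyoneda.obj (op X))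

/-- `K` is locally `α`-presentable: it is cocomplete and has a small full subcategory of
`α`-presentable objects such that every object is an `α`-filtered colimit of objects
from it. -/
def IsLocallyPresentableAt (K : Type u) [Category.{v} K] (α : Cardinal.{v}) : Prop :=
  HasColimitsOfSize.{v, v} K ∧ α.IsRegular ∧
    ∃ P : K → Prop, Small.{v} (Subtype P) ∧ (∀ X, P X → IsPresentableObj α X) ∧
      ∀ X : K, ∃ J : Cat.{v, v}, IsCardinalFiltered J α ∧
        ∃ (F : J ⥤ K) (c : Cocone F),
          (∀ j, P (F.obj j)) ∧ c.pt = X ∧ Nonempty (IsColimit c)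

/-- `K` is locally presentable. -/
def IsLocallyPresentable (K : Type u) [Category.{v} K] : Prop :=
  ∃ α : Cardinal.{v}, IsLocallyPresentableAt K α

/-- `PF : PK ⥤ PL` is the (essentially unique) functor sending a small presheaf `X` to the
left Kan extension of `X` along `Fᵒᵖ`. -/
def IsPshExtensionOf {K : Type u} {L : Type u'} [Category.{v} K] [Category.{v} L]
    (F : K ⥤ L) (PF : SmallPresheaf K ⥤ SmallPresheaf L) : Prop :=
  ∃ ε : ObjectProperty.ι (fun X : Kᵒᵖ ⥤ Type v => IsSmallFunctor.{v} X) ⟶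
      PF ⋙ ObjectProperty.ι (fun X : Lᵒᵖ ⥤ Type v => IsSmallFunctor.{v} X) ⋙
        (Functor.whiskeringLeft Kᵒᵖ Lᵒᵖ (Type v)).obj F.op,
    ∀ X : SmallPresheaf K, Functor.IsLeftKanExtension ((PF.obj X).obj) (ε.app X)

open MonoidalCategory in
/-- `D` is the Day convolution `∫^{A,B} K(-, A ⊗ B) × F A × G B` of the presheaves
`F` and `G`: it carries a universal wedge. -/
def IsDayConvolution {K : Type u} [Category.{v} K] [MonoidalCategory K]
    (F G D : Kᵒᵖ ⥤ Type v) : Prop :=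
  ∃ u : ∀ A B : K, F.obj (op A) → G.obj (op B) → D.obj (op (A ⊗ B)),
    (∀ (A A' B B' : K) (f : A' ⟶ A) (g : B' ⟶ B) (x : F.obj (op A)) (y : G.obj (op B)),
      u A' B' (F.map f.op x) (G.map g.op y)
        = D.map (MonoidalCategory.tensorHom f g).op (u A B x y)) ∧
    ∀ (H : Kᵒᵖ ⥤ Type v)
      (p : ∀ A B : K, F.obj (op A) → G.obj (op B) → H.obj (op (A ⊗ B))),
      (∀ (A A' B B' : K) (f : A' ⟶ A) (g : B' ⟶ B) (x : F.obj (op A)) (y : G.obj (op B)),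
        p A' B' (F.map f.op x) (G.map g.op y)
          = H.map (MonoidalCategory.tensorHom f g).op (p A B x y)) →
      ∃! τ : D ⟶ H, ∀ (A B : K) (x : F.obj (op A)) (y : G.obj (op B)),
        τ.app (op (A ⊗ B)) (u A B x y) = p A B x y

/-- The restricted Yoneda embedding of `M` into presheaves on the full subcategory of
`β`-presentable objects. -/
def restrictedYoneda (M : Type u) [Category.{v} M] (β : Cardinal.{v}) :
    M ⥤ ((ObjectProperty.FullSubcategory (IsPresentableObj β : M → Prop))ᵒᵖ ⥤ Type v) :=
  yoneda ⋙ (Functor.whiskeringLeft _ _ _).obj (ObjectProperty.ι _).op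

section AUX
set_option maxHeartbeats 1000000
set_option linter.unusedSectionVars false


section Infra
variable {C : Type u'} [Category.{v} C] {B : Type u} [Category.{v} B]

lemma myLocallySmall_costructured (ι : C ⥤ B) (b : B) [LocallySmall.{v} C] :
    LocallySmall.{v} (CostructuredArrow ι b) := by
  constructor
  intro X Y
  refine small_of_injective (f := fun f => (f.left : X.left ⟶ Y.left)) ?_
  intro f g hfg
  apply CostructuredArrow.hom_ext _ _ hfg

lemma mySmall_costructured (ι : C ⥤ B) (b : B) [Small.{v} C] :
    Small.{v} (CostructuredArrow ι b) := by
  refine small_of_injective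
    (f := fun X => (⟨X.left, X.hom⟩ : Σ c : C, (ι.obj c ⟶ b))) ?_
  intro X Y hXY
  obtain ⟨hl, hh⟩ := Sigma.mk.inj_iff.mp hXY
  obtain ⟨Xl, ⟨⟨⟩⟩, Xh⟩ := X
  obtain ⟨Yl, ⟨⟨⟩⟩, Yh⟩ := Y
  cases hl
  cases heq_eq_eq _ _ ▸ hh
  rfl

lemma myHasColimitsShape (ι : C ⥤ B) (b : B) [Small.{v} C] [LocallySmall.{v} C] :
    HasColimitsOfShape (CostructuredArrow ι b) (Type v) := by
  have := myLocallySmall_costructured ι b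
  have := mySmall_costructured ι b
  have : EssentiallySmall.{v} (CostructuredArrow ι b) :=
    essentiallySmall_of_small_of_locallySmall _
  exact hasColimitsOfShape_of_essentiallySmall _ _

lemma myHasPointwise (ι : C ⥤ B) [Small.{v} C] [LocallySmall.{v} C] (F : C ⥤ Type v) :
    ι.HasPointwiseLeftKanExtension F := by
  intro b
  have := myHasColimitsShape ι b
  infer_instance

lemma myHasLKE (ι : C ⥤ B) [Small.{v} C] [LocallySmall.{v} C] (F : C ⥤ Type v) :
    ι.HasLeftKanExtension F := by
  have := myHasPointwise ι F
  infer_instance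

end Infra

section T
variable {B : Type u} [Category.{v} B]

lemma mySmallFS (P : B → Prop) [Small.{v} (Subtype P)] : Small.{v} (ObjectProperty.FullSubcategory P) :=
  small_of_injective (f := fun X => (⟨X.obj, X.property⟩ : Subtype P))
    (fun X Y h => by cases X; cases Y; simpa using h)

instance myLocallySmallFS (P : B → Prop) : LocallySmall.{v} (ObjectProperty.FullSubcategory P) :=
  ⟨fun {_ _} => small_self _⟩

example (P P' : B → Prop) (h : ∀ ⦃b⦄, P b → P' b) :
    ((Functor.whiskeringLeft _ _ (Type v)).obj (ObjectProperty.ι P')) ⋙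
      ((Functor.whiskeringLeft _ _ (Type v)).obj (ObjectProperty.ιOfLE h)) =
    (Functor.whiskeringLeft _ _ (Type v)).obj (ObjectProperty.ι P) := rfl

/-- Enlarging the subcategory preserves the property of being a left Kan extension. -/
lemma myKEP_mono {P P' : B → Prop} (hPP' : ∀ ⦃b⦄, P b → P' b)
    [Small.{v} (Subtype P)] [Small.{v} (Subtype P')] (X : B ⥤ Type v)
    (hX : X.IsLeftKanExtension (𝟙 (ObjectProperty.ι P ⋙ X))) :
    X.IsLeftKanExtension (𝟙 (ObjectProperty.ι P' ⋙ X)) := by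
  have := mySmallFS P
  have := mySmallFS P'
  set ι := ObjectProperty.ι P
  set ι' := ObjectProperty.ι P'
  set j : ObjectProperty.FullSubcategory P ⥤ ObjectProperty.FullSubcategory P' := ObjectProperty.ιOfLE hPP' with hj
  haveI hptι : ∀ F : ObjectProperty.FullSubcategory P ⥤ Type v, ι.HasPointwiseLeftKanExtension F :=
    fun F => myHasPointwise ι F
  haveI : ∀ F : ObjectProperty.FullSubcategory P ⥤ Type v, ι.HasLeftKanExtension F := fun F => myHasLKE ι F
  haveI : ∀ F : ObjectProperty.FullSubcategory P' ⥤ Type v, ι'.HasLeftKanExtension F := fun F => myHasLKE ι' F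
  haveI : ∀ F : ObjectProperty.FullSubcategory P ⥤ Type v, j.HasLeftKanExtension F := fun F => myHasLKE j F
  -- pointwise LKE of X along ι
  haveI := hX
  have hpt := Functor.isPointwiseLeftKanExtensionOfIsLeftKanExtension X
    (𝟙 (ι ⋙ X))
  -- restriction along ι' is a pointwise LKE along j
  have hptj : (Functor.LeftExtension.mk (ι' ⋙ X)
      (𝟙 (j ⋙ (ι' ⋙ X)))).IsPointwiseLeftKanExtension := by
    intro p'
    let eqv : CostructuredArrow j p' ⥤ CostructuredArrow ι (ι'.obj p') :=
      CostructuredArrow.post j ι' p'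
    haveI : eqv.IsEquivalence := CostructuredArrow.isEquivalence_post p' j ι'
    have h1 := (hpt (ι'.obj p')).whiskerEquivalence eqv.asEquivalence
    refine IsColimit.ofIsoColimit h1 (Cocones.ext (Iso.refl _) (fun g => ?_))
    dsimp [eqv]
    simp
    rfl
  have hj' : (ι' ⋙ X).IsLeftKanExtension (𝟙 (j ⋙ (ι' ⋙ X))) := hptj.isLeftKanExtension
  -- now compare counits
  rw [← Functor.isIso_lanAdjunction_counit_app_iff]
  have hcP : IsIso ((ι.lanAdjunction (Type v)).counit.app X) := by
    rw [Functor.isIso_lanAdjunction_counit_app_iff]; exact hX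
  have hcomp : ((j.lanAdjunction (Type v)).comp (ι'.lanAdjunction (Type v))).counit.app X
      = ι'.lan.map ((j.lanAdjunction (Type v)).counit.app (ι' ⋙ X)) ≫
        (ι'.lanAdjunction (Type v)).counit.app X := Adjunction.comp_counit_app _ _ _
  have hcj : IsIso ((j.lanAdjunction (Type v)).counit.app (ι' ⋙ X)) := by
    rw [Functor.isIso_lanAdjunction_counit_app_iff]; exact hj'
  have hiso : IsIso (((j.lanAdjunction (Type v)).comp (ι'.lanAdjunction (Type v))).counit.app X) := by
    have := Adjunction.leftAdjointUniq_hom_app_counit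
      ((j.lanAdjunction (Type v)).comp (ι'.lanAdjunction (Type v)))
      (ι.lanAdjunction (Type v)) X
    rw [← this]
    infer_instance
  rw [hcomp] at hiso
  exact IsIso.of_isIso_comp_left (ι'.lan.map ((j.lanAdjunction (Type v)).counit.app (ι' ⋙ X))) _
end T

section Colim
variable {B : Type u} [Category.{v} B]

lemma myKEP_of_iso {X Y : B ⥤ Type v} (e : X ≅ Y) (P : B → Prop)
    (hX : X.IsLeftKanExtension (𝟙 (ObjectProperty.ι P ⋙ X))) :
    Y.IsLeftKanExtension (𝟙 (ObjectProperty.ι P ⋙ Y)) := by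
  haveI := hX
  exact (Functor.isLeftKanExtension_iff_of_iso₂
    (𝟙 (ObjectProperty.ι P ⋙ X)) (𝟙 (ObjectProperty.ι P ⋙ Y))
    (Functor.isoWhiskerLeft (ObjectProperty.ι P) e) e (by aesop_cat)).mp hX

lemma myKEP_colimit {J : Type v} [SmallCategory J]
    (D : J ⥤ (B ⥤ Type v)) (c : Cocone D) (hc : IsColimit c)
    (P : B → Prop) [Small.{v} (Subtype P)]
    (hD : ∀ j, (D.obj j).IsLeftKanExtension (𝟙 (ObjectProperty.ι P ⋙ D.obj j))) :
    c.pt.IsLeftKanExtension (𝟙 (ObjectProperty.ι P ⋙ c.pt)) := by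
  have := mySmallFS P
  set ι := ObjectProperty.ι P
  haveI : ∀ F : ObjectProperty.FullSubcategory P ⥤ Type v, ι.HasLeftKanExtension F := fun F => myHasLKE ι F
  set res := (Functor.whiskeringLeft _ _ (Type v)).obj ι
  set T : (B ⥤ Type v) ⥤ (B ⥤ Type v) := res ⋙ ι.lan with hT
  have hpres1 : PreservesColimitsOfShape J res := inferInstance
  have hpres2 : PreservesColimitsOfShape J ι.lan :=
    (ι.lanAdjunction (Type v)).leftAdjoint_preservesColimits.preservesColimitsOfShape
  haveI := hpres1; haveI := hpres2
  have hpres : PreservesColimitsOfShape J T := by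
    have : T = res ⋙ ι.lan := rfl
    rw [this]; infer_instance
  set θ := (ι.lanAdjunction (Type v)).counit with hθ
  have hiso : ∀ j, IsIso (θ.app (D.obj j)) := fun j => by
    rw [hθ, Functor.isIso_lanAdjunction_counit_app_iff]; exact hD j
  rw [← Functor.isIso_lanAdjunction_counit_app_iff]
  have hc' : IsColimit (T.mapCocone c) := isColimitOfPreserves T hc
  let α : D ⋙ T ≅ D := NatIso.ofComponents
    (fun j => @asIso _ _ _ _ _ (hiso j))
    (fun {j j'} f => by simpa using θ.naturality (D.map f))
  have claim : θ.app c.pt = (IsColimit.coconePointsIsoOfNatIso hc' hc α).hom := by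
    apply hc'.hom_ext
    intro j
    rw [IsColimit.comp_coconePointsIsoOfNatIso_hom]
    have hn := θ.naturality (c.ι.app j)
    dsimp at hn ⊢
    have hα : α.hom.app j = θ.app (D.obj j) := rfl
    rw [hα, ← hn]
    rfl
  rw [show (ι.lanAdjunction (Type v)).counit.app c.pt = θ.app c.pt from rfl, claim]
  infer_instance

lemma myIsSmall_colimit {J : Type u'} [Category.{v'} J] [EssentiallySmall.{v} J]
    (D : J ⥤ (B ⥤ Type v)) (c : Cocone D) (hc : IsColimit c)
    (hD : ∀ j, ∃ P : B → Prop, Small.{v} (Subtype P) ∧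
      (D.obj j).IsLeftKanExtension (𝟙 (ObjectProperty.ι P ⋙ D.obj j))) :
    ∃ P : B → Prop, Small.{v} (Subtype P) ∧
      c.pt.IsLeftKanExtension (𝟙 (ObjectProperty.ι P ⋙ c.pt)) := by
  let e := (equivSmallModel.{v} J).symm
  set J' := SmallModel.{v} J
  set D' := e.functor ⋙ D with hD'
  have hc' : IsColimit (c.whisker e.functor) := hc.whiskerEquivalence e
  have key : ∀ j' : J', ∃ P : B → Prop, Small.{v} (Subtype P) ∧
      (D'.obj j').IsLeftKanExtension (𝟙 (ObjectProperty.ι P ⋙ D'.obj j')) :=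
    fun j' => hD (e.functor.obj j')
  choose Pf hPsmall hPke using key
  set P : B → Prop := fun b => ∃ j' : J', Pf j' b with hP
  haveI : ∀ j', Small.{v} (Subtype (Pf j')) := hPsmall
  haveI : Small.{v} (Subtype P) := by
    refine small_of_surjective (f := fun x : Σ j' : J', Subtype (Pf j') =>
      (⟨x.2.1, ⟨x.1, x.2.2⟩⟩ : Subtype P)) ?_
    rintro ⟨b, j', hb⟩
    exact ⟨⟨j', ⟨b, hb⟩⟩, rfl⟩
  refine ⟨P, inferInstance, ?_⟩
  have : ∀ j', (D'.obj j').IsLeftKanExtension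
      (𝟙 (ObjectProperty.ι P ⋙ D'.obj j')) := fun j' =>
    myKEP_mono (fun b hb => ⟨j', hb⟩) _ (hPke j')
  exact myKEP_colimit D' (c.whisker e.functor) hc' P this
end Colim

section Rep
variable {C : Type u'} [Category.{v} C] (Γ : C ⥤ Type v)

/-- The tautological cocone of corepresentables over the category of elements. -/
@[simps]
def myTautCocone : Cocone ((CategoryOfElements.π Γ).op ⋙ coyoneda) where
  pt := Γ
  ι :=
    { app := fun e =>
        { app := fun c => TypeCat.ofHom (fun h => Γ.map h e.unop.2)
          naturality := fun c c' f => by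
            ext h
            exact FunctorToTypes.map_comp_apply Γ h f e.unop.2 }
      naturality := fun e e' φ => by
        ext c h
        have := φ.unop.2
        dsimp at this ⊢
        exact (FunctorToTypes.map_comp_apply Γ _ h _).trans (congrArg (Γ.map h) this) }

/-- The tautological cocone is a colimit. -/
def myTautIsColimit : IsColimit (myTautCocone Γ) where
  desc s :=
    { app := fun c => TypeCat.ofHom (fun x => (s.ι.app (op ⟨c, x⟩)).app c (𝟙 c))
      naturality := fun c c' f => by
        ext x
        have hw := ConcreteCategory.congr_hom (NatTrans.congr_app
          (s.w ((CategoryOfElements.homMk (Γ.elementsMk c x) (Γ.elementsMk c' (Γ.map f x))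
            f rfl).op : op (Γ.elementsMk c' (Γ.map f x)) ⟶ op (Γ.elementsMk c x))) c') (𝟙 c')
        have hn := ConcreteCategory.congr_hom ((s.ι.app (op (Γ.elementsMk c x))).naturality f) (𝟙 c)
        change (s.ι.app (op (Γ.elementsMk c x))).app c' (f ≫ 𝟙 c') = _ at hw
        change (s.ι.app (op (Γ.elementsMk c x))).app c' (𝟙 c ≫ f) = s.pt.map f
          ((s.ι.app (op (Γ.elementsMk c x))).app c (𝟙 c)) at hn
        exact hw.symm.trans ((congrArg (fun g : c ⟶ c' =>
          (s.ι.app (op (Γ.elementsMk c x))).app c' g)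
          ((Category.comp_id f).trans (Category.id_comp f).symm)).trans hn)
      }
  fac s e := by
    ext c h
    have hw := ConcreteCategory.congr_hom (NatTrans.congr_app
      (s.w ((CategoryOfElements.homMk e.unop (Γ.elementsMk c (Γ.map h e.unop.2))
        h rfl).op : op (Γ.elementsMk c (Γ.map h e.unop.2)) ⟶ op e.unop)) c) (𝟙 c)
    change (s.ι.app e).app c ((h : e.unop.1 ⟶ c) ≫ 𝟙 c) = _ at hw
    simp only [Category.comp_id] at hw
    exact hw.symm
  uniq s m hm := by
    ext c x
    have := ConcreteCategory.congr_hom (NatTrans.congr_app (hm (op (Γ.elementsMk c x))) c) (𝟙 c)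
    change m.app c (Γ.map (𝟙 c) (x : Γ.obj c)) = _ at this
    exact (congrArg (fun y => m.app c y)
      (FunctorToTypes.map_id_apply Γ (x : Γ.obj c)).symm).trans this

lemma mySmall_elements [Small.{v} C] : Small.{v} Γ.Elements :=
  inferInstanceAs (Small.{v} (Σ c : C, Γ.obj c))

lemma myLocallySmall_elements [LocallySmall.{v} C] : LocallySmall.{v} Γ.Elements :=
  ⟨fun {X Y} => small_of_injective (f := fun f => (f.val : X.1 ⟶ Y.1))
    (fun f g h => Subtype.ext h)⟩

lemma myEssSmall_elements_op [Small.{v} C] [LocallySmall.{v} C] :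
    EssentiallySmall.{v} (Γ.Elements)ᵒᵖ := by
  haveI := mySmall_elements Γ
  haveI := myLocallySmall_elements Γ
  haveI : Small.{v} (Γ.Elements)ᵒᵖ :=
    small_of_injective (f := Opposite.unop) (fun x y h => by cases x; cases y; simpa using h)
  haveI : LocallySmall.{v} (Γ.Elements)ᵒᵖ :=
    ⟨fun {X Y} => small_map (Quiver.Hom.opEquiv (V := Γ.Elements)).symm⟩
  exact essentiallySmall_of_small_of_locallySmall _
end Rep

section SmallQ
variable {B : Type u} [Category.{v} B]

/-- A corepresentable functor at an object of the subcategory is a left Kan extension of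
its restriction. -/
lemma myCoyoneda_KEP (P : B → Prop) (q : ObjectProperty.FullSubcategory P) :
    (coyoneda.obj (op ((ObjectProperty.ι P).obj q))).IsLeftKanExtension
      (𝟙 (ObjectProperty.ι P ⋙
        coyoneda.obj (op ((ObjectProperty.ι P).obj q)))) := by
  set ι := ObjectProperty.ι P
  set Y := coyoneda.obj (op (ι.obj q)) with hY
  constructor
  refine ⟨IsInitial.ofUniqueHom (fun E => StructuredArrow.homMk
    (coyonedaEquiv.symm (E.hom.app q (𝟙 (ι.obj q)))) ?_) ?_⟩
  · ext p h
    -- h : ι.obj q ⟶ ι.obj p, which is also a map q ⟶ p in the subcategory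
    have hnat := ConcreteCategory.congr_hom (E.hom.naturality (ObjectProperty.homMk h)) (𝟙 (ι.obj q))
    dsimp at hnat ⊢
    have h2 : Y.map (ι.map (ObjectProperty.homMk h)) (𝟙 (ι.obj q)) = h := Category.id_comp h
    rw [h2] at hnat
    exact hnat.symm
  · intro E m
    apply StructuredArrow.hom_ext
    ext b h
    have hx := ConcreteCategory.congr_hom (NatTrans.congr_app m.w q) (𝟙 (ι.obj q))
    have hnat := ConcreteCategory.congr_hom (m.right.naturality (show ι.obj q ⟶ b from h)) (𝟙 (ι.obj q))
    change m.right.app (ι.obj q) (𝟙 (ι.obj q)) = E.hom.app q (𝟙 (ι.obj q)) at hx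
    change m.right.app b (Y.map h (𝟙 (ι.obj q))) =
      E.right.map h (m.right.app (ι.obj q) (𝟙 (ι.obj q))) at hnat
    have h2 : Y.map h (𝟙 (ι.obj q)) = h := Category.id_comp h
    rw [h2, hx] at hnat
    exact hnat
end SmallQ

section Res
variable {K : Type u} {L : Type u'} [Category.{v} K] [Category.{v} L]

/-- Restriction along `F` preserves smallness of presheaves, provided all the
presheaves `L(F-, l)` are small. -/
lemma myIsSmall_restrict (F : K ⥤ L)
    (h : ∀ l : L, IsSmallFunctor.{v} (F.op ⋙ yoneda.obj l))
    (G : Lᵒᵖ ⥤ Type v) (hG : IsSmallFunctor.{v} G) :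
    IsSmallFunctor.{v} (F.op ⋙ G) := by
  obtain ⟨Q, hQ, hKE⟩ := hG
  haveI := hQ
  haveI := mySmallFS Q
  set ι := ObjectProperty.ι Q with hι
  haveI : ∀ H : ObjectProperty.FullSubcategory Q ⥤ Type v, ι.HasLeftKanExtension H := fun H => myHasLKE ι H
  set Γ : ObjectProperty.FullSubcategory Q ⥤ Type v := ι ⋙ G with hΓ
  haveI hess : EssentiallySmall.{v} (Γ.Elements)ᵒᵖ := myEssSmall_elements_op Γ
  haveI : HasColimitsOfShape (Γ.Elements)ᵒᵖ (Type v) :=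
    hasColimitsOfShape_of_essentiallySmall _ _
  set W : (ObjectProperty.FullSubcategory Q ⥤ Type v) ⥤ (Kᵒᵖ ⥤ Type v) :=
    ι.lan ⋙ (Functor.whiskeringLeft Kᵒᵖ Lᵒᵖ (Type v)).obj F.op with hW
  haveI hp1 : PreservesColimitsOfShape (Γ.Elements)ᵒᵖ ι.lan :=
    (ι.lanAdjunction (Type v)).leftAdjoint_preservesColimits.preservesColimitsOfShape
  haveI hp2 : PreservesColimitsOfShape (Γ.Elements)ᵒᵖ
      ((Functor.whiskeringLeft Kᵒᵖ Lᵒᵖ (Type v)).obj F.op) := inferInstance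
  haveI hpW : PreservesColimitsOfShape (Γ.Elements)ᵒᵖ W := by
    rw [hW]; infer_instance
  have hc : IsColimit (W.mapCocone (myTautCocone Γ)) :=
    isColimitOfPreserves W (myTautIsColimit Γ)
  have hvert : ∀ e : (Γ.Elements)ᵒᵖ, IsSmallFunctor.{v}
      ((((CategoryOfElements.π Γ).op ⋙ coyoneda) ⋙ W).obj e) := by
    intro e
    obtain ⟨P, hP, hKEP⟩ := h ((ι.obj e.unop.1).unop)
    haveI := hP
    haveI := myCoyoneda_KEP Q e.unop.1
    have e1 : ι.lan.obj (ι ⋙ coyoneda.obj (op (ι.obj e.unop.1))) ≅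
        coyoneda.obj (op (ι.obj e.unop.1)) :=
      Functor.leftKanExtensionUnique _ (ι.lanUnit.app _) _
        (𝟙 (ι ⋙ coyoneda.obj (op (ι.obj e.unop.1))))
    have e2 : ((((CategoryOfElements.π Γ).op ⋙ coyoneda) ⋙ W).obj e : Kᵒᵖ ⥤ Type v) ≅
        F.op ⋙ yoneda.obj ((ι.obj e.unop.1).unop) :=
      ((Functor.whiskeringLeft Kᵒᵖ Lᵒᵖ (Type v)).obj F.op).mapIso (ι.lan.mapIso
          (NatIso.ofComponents (fun p => (ObjectProperty.fullyFaithfulι Q).homEquiv.toIso)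
            (by intros; ext; rfl)) ≪≫ e1) ≪≫
        Functor.isoWhiskerLeft F.op (Coyoneda.objOpOp ((ι.obj e.unop.1).unop))
    exact ⟨P, hP, myKEP_of_iso e2.symm P hKEP⟩
  obtain ⟨P, hP, hKEpt⟩ := myIsSmall_colimit _ _ hc hvert
  haveI := hP
  refine ⟨P, hP, myKEP_of_iso ?_ P hKEpt⟩
  -- (W.mapCocone (myTautCocone Γ)).pt = W.obj Γ ≅ F.op ⋙ G
  haveI := hKE
  exact ((Functor.whiskeringLeft Kᵒᵖ Lᵒᵖ (Type v)).obj F.op).mapIso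
    (Functor.leftKanExtensionUnique
      (ι.lan.obj Γ) (ι.lanUnit.app Γ) G (𝟙 (ι ⋙ G)))
end Res

section AdjAux
variable {C : Type u} {D : Type u'} {H : Type w} [Category.{v} C] [Category.{v'} D]
  [Category.{v} H]

lemma myWhisk_nat (Lf : C ⥤ D) {A : C ⥤ H} {B Gq Gq' : D ⥤ H}
    (α : A ⟶ Lf ⋙ B) (u : B ⟶ Gq) (g : Gq ⟶ Gq') :
    α ≫ Functor.whiskerLeft Lf (u ≫ g) = (α ≫ Functor.whiskerLeft Lf u) ≫ Functor.whiskerLeft Lf g := by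
  rw [Functor.whiskerLeft_comp, Category.assoc]

lemma myDesc_nat (Lf : C ⥤ D) {A A' : C ⥤ H} {B B' Gq : D ⥤ H}
    (α : A ⟶ Lf ⋙ B) (α' : A' ⟶ Lf ⋙ B')
    [B.IsLeftKanExtension α] [B'.IsLeftKanExtension α']
    (f : A' ⟶ A) (pf : B' ⟶ B) (hcompat : f ≫ α = α' ≫ Functor.whiskerLeft Lf pf)
    (g : A ⟶ Lf ⋙ Gq) :
    B'.descOfIsLeftKanExtension α' Gq (f ≫ g) =
      pf ≫ B.descOfIsLeftKanExtension α Gq g := by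
  apply Functor.hom_ext_of_isLeftKanExtension _ α'
  rw [Functor.descOfIsLeftKanExtension_fac, Functor.whiskerLeft_comp, ← Category.assoc,
    ← hcompat, Category.assoc, Functor.descOfIsLeftKanExtension_fac]
end AdjAux

end AUX

/-- For any functor `F : K ⥤ L`, the functor `PF : PK ⥤ PL` has a right
adjoint iff every presheaf `L(F-, l)` is small, and then the right adjoint is given by
restriction along `F`. -/
theorem statement3 {K : Type u} {L : Type u'} [Category.{v} K] [Category.{v} L]
    (F : K ⥤ L) (PF : SmallPresheaf K ⥤ SmallPresheaf L)
    (hPF : IsPshExtensionOf F PF) :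
    (PF.IsLeftAdjoint ↔ ∀ l : L, IsSmallFunctor.{v} (F.op ⋙ yoneda.obj l)) ∧
    ((∀ l : L, IsSmallFunctor.{v} (F.op ⋙ yoneda.obj l)) →
      ∃ R : SmallPresheaf L ⥤ SmallPresheaf K, Nonempty (PF ⊣ R) ∧
        ∀ G : SmallPresheaf L, Nonempty ((R.obj G).obj ≅ F.op ⋙ G.obj)) := by
  obtain ⟨ε, hε⟩ := hPF
  have key : (∀ l : L, IsSmallFunctor.{v} (F.op ⋙ yoneda.obj l)) →
      ∃ R : SmallPresheaf L ⥤ SmallPresheaf K, Nonempty (PF ⊣ R) ∧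
        ∀ G : SmallPresheaf L, Nonempty ((R.obj G).obj ≅ F.op ⋙ G.obj) := by
    intro h
    refine ⟨ObjectProperty.lift _
      (ObjectProperty.ι _ ⋙ (Functor.whiskeringLeft Kᵒᵖ Lᵒᵖ (Type v)).obj F.op)
      (fun G => myIsSmall_restrict F h G.obj G.property), ⟨?_⟩, fun G => ⟨Iso.refl _⟩⟩
    refine Adjunction.mkOfHomEquiv
      { homEquiv := fun X G =>
          haveI := hε X
          ((ObjectProperty.fullyFaithfulι _).homEquiv.trans
            ((Functor.homEquivOfIsLeftKanExtension ((PF.obj X).obj) (ε.app X) G.obj :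
            ((PF.obj X).obj ⟶ G.obj) ≃ (X.obj ⟶ F.op ⋙ G.obj)).trans
              ((ObjectProperty.fullyFaithfulι _).homEquiv (X := X)
                (Y := ⟨F.op ⋙ G.obj, myIsSmall_restrict F h G.obj G.property⟩)).symm))
        homEquiv_naturality_left_symm := fun {X' X G} f g => by
          haveI : ((ObjectProperty.ι (fun X : Lᵒᵖ ⥤ Type v =>
            IsSmallFunctor.{v} X)).obj (PF.obj X)).IsLeftKanExtension (ε.app X) := hε X
          haveI : ((ObjectProperty.ι (fun X : Lᵒᵖ ⥤ Type v =>
            IsSmallFunctor.{v} X)).obj (PF.obj X')).IsLeftKanExtension (ε.app X') := hε X'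
          apply ObjectProperty.hom_ext
          exact myDesc_nat F.op (ε.app X) (ε.app X') f.hom (PF.map f).hom (ε.naturality f) g.hom
        homEquiv_naturality_right := fun {X G G'} u g => by
          haveI := hε X
          apply ObjectProperty.hom_ext
          exact myWhisk_nat F.op (ε.app X) u.hom g.hom }
  constructor
  · constructor
    · intro hadj l
      obtain ⟨R, ⟨adj⟩⟩ := hadj.exists_rightAdjoint
      set Gl : SmallPresheaf L := ⟨yoneda.obj l, isSmallFunctor_yoneda_obj l⟩ with hGl
      set φ : (R.obj Gl).obj ⟶ F.op ⋙ yoneda.obj l :=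
        ε.app (R.obj Gl) ≫ Functor.whiskerLeft F.op ((adj.counit.app Gl).hom : (PF.obj (R.obj Gl)).obj ⟶ yoneda.obj l) with hφ
      have hbij : ∀ k : Kᵒᵖ, Function.Bijective (φ.app k) := by
        intro k
        haveI := hε ((smallYoneda K).obj k.unop)
        let E : (R.obj Gl).obj.obj k ≃ (F.op ⋙ yoneda.obj l).obj k :=
          ((yonedaEquiv (C := K) (X := k.unop) (F := (R.obj Gl).obj)).symm.trans
            ((ObjectProperty.fullyFaithfulι _).homEquiv.symm.trans
            (((adj.homEquiv ((smallYoneda K).obj k.unop) Gl).symm).trans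
              ((ObjectProperty.fullyFaithfulι _).homEquiv.trans
              ((Functor.homEquivOfIsLeftKanExtension
                  ((PF.obj ((smallYoneda K).obj k.unop)).obj)
                  (ε.app ((smallYoneda K).obj k.unop)) (yoneda.obj l)).trans
                yonedaEquiv)))))
        have hE : ∀ x, φ.app k x = E x := by
          intro x
          have hu : (yonedaEquiv.symm x : yoneda.obj k.unop ⟶ (R.obj Gl).obj).app k
              (𝟙 k.unop) = x := by
            change (R.obj Gl).obj.map (𝟙 k.unop).op x = x
            exact FunctorToTypes.map_id_apply (R.obj Gl).obj x
          have hnat := ConcreteCategory.congr_hom (NatTrans.congr_app (ε.naturality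
            (X := (smallYoneda K).obj k.unop) (Y := R.obj Gl) (ObjectProperty.homMk (yonedaEquiv.symm x))) k)
            (𝟙 k.unop)
          show (adj.counit.app Gl).hom.app (F.op.obj k) ((ε.app (R.obj Gl)).app k x)
            = (adj.counit.app Gl).hom.app (F.op.obj k)
              ((PF.map (X := (smallYoneda K).obj k.unop) (Y := R.obj Gl)
                (ObjectProperty.homMk (yonedaEquiv.symm x))).hom.app (F.op.obj k)
                ((ε.app ((smallYoneda K).obj k.unop)).app k (𝟙 k.unop)))
          apply congrArg
          dsimp at hnat
          conv_lhs => rw [← hu]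
          exact hnat
        have : ⇑(φ.app k) = E := funext hE
        rw [this]
        exact E.bijective
      haveI : ∀ k, IsIso (φ.app k) := fun k => (isIso_iff_bijective _).mpr (hbij k)
      haveI : IsIso φ := NatIso.isIso_of_isIso_app φ
      obtain ⟨P, hP, hKE⟩ := (R.obj Gl).property
      haveI := hP
      exact ⟨P, hP, myKEP_of_iso (asIso φ) P hKE⟩
    · intro h
      obtain ⟨R, ⟨adj⟩, _⟩ := key h
      exact ⟨R, ⟨adj⟩⟩
  · exact key
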